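/- Let S be a zerosumfree semiring, G an ordered Abelian group, and f : S → G a non-negative finitely additive function. Then d(s,t) = f(s △ t) defines a G-valued semi-metric on the set of complemented elements of S: d(s,t) ≥ 0, d(s,s) = 0, d(s,t) = d(t,s), and d(s,u) ≤ d(s,t) + d(t,u). Moreover, if f is positive (f(x) = 0 iff x = 0), then d(s,t) = 0 implies s = t. -/

import Mathlib

private lemma f_add4 {S G : Type*} [CommSemiring S] [AddCommGroup G] [PartialOrder G] [IsOrderedAddMonoid G]
    (f : S → G)
    (hf : ∀ a b : S, a * b = 0 → f (a + b) = f a + f b)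
    (a b c d : S) (hab : a * b = 0) (hac : a * c = 0) (had : a * d = 0)
    (hbc : b * c = 0) (hbd : b * d = 0) (hcd : c * d = 0) :
    f (a + b + c + d) = f a + f b + f c + f d := by
  have h1 : (a + b) * (c + d) = 0 := by
    have : (a + b) * (c + d) = a * c + a * d + b * c + b * d := by ring
    rw [this, hac, had, hbc, hbd]; ring
  have h2 : f (a + b + (c + d)) = f (a + b) + f (c + d) := hf _ _ h1
  have h3 : f (a + b) = f a + f b := hf _ _ hab
  have h4 : f (c + d) = f c + f d := hf _ _ hcd
  calc f (a + b + c + d) = f (a + b + (c + d)) := by ring_nf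
    _ = f a + f b + f c + f d := by rw [h2, h3, h4]; abel

/-- Let `S` be a zerosumfree commutative semiring, `G` an ordered Abelian group, and
`f : S → G` non-negative and finitely additive. Then `d(s,t) = f (s △ t)`
(where `s △ t = s⊥ t + s t⊥` for complemented `s, t`) is a `G`-semi-metric on the
complemented elements: non-negative, zero on the diagonal, symmetric, and satisfying
the triangle inequality. Moreover, if `f` is positive then `d(s,t) = 0` implies `s = t`. -/
theorem finitelyAdditive_symmDiff_semimetric
    {S G : Type*} [CommSemiring S] [AddCommGroup G] [PartialOrder G] [IsOrderedAddMonoid G]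
    (hzs : ∀ a b : S, a + b = 0 → a = 0 ∧ b = 0)
    (f : S → G)
    (hnonneg : ∀ x : S, 0 ≤ f x)
    (hf : ∀ a b : S, a * b = 0 → f (a + b) = f a + f b) :
    ∀ s t u cs ct cu : S,
      s * cs = 0 → s + cs = 1 →
      t * ct = 0 → t + ct = 1 →
      u * cu = 0 → u + cu = 1 →
      (0 ≤ f (cs * t + s * ct)) ∧
      (f (cs * s + s * cs) = 0) ∧
      (f (cs * t + s * ct) = f (ct * s + t * cs)) ∧
      (f (cs * u + s * cu) ≤ f (cs * t + s * ct) + f (ct * u + t * cu)) ∧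
      ((∀ x : S, f x = 0 → x = 0) → f (cs * t + s * ct) = 0 → s = t) := by
  intro s t u cs ct cu hs hs1 ht ht1 hu hu1
  have hf0 : f 0 = 0 := by
    have := hf 0 0 (by ring)
    simp at this
    exact this
  refine ⟨hnonneg _, ?_, ?_, ?_, ?_⟩
  · have : cs * s + s * cs = 0 := by
      have h : cs * s + s * cs = (s * cs) + (s * cs) := by ring
      rw [h, hs]; ring
    rw [this, hf0]
  · congr 1
    ring
  · -- triangle inequality
    -- decompose LHS
    have eL : f (cs * u + s * cu)
        = f (cs*t*u) + f (cs*ct*u) + f (s*t*cu) + f (s*ct*cu) := by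
      have harg : cs * u + s * cu = cs*t*u + cs*ct*u + s*t*cu + s*ct*cu := by
        have : cs * u + s * cu = cs*u*(t+ct) + s*cu*(t+ct) := by rw [ht1]; ring
        rw [this]; ring
      rw [harg]
      refine f_add4 f hf _ _ _ _ ?_ ?_ ?_ ?_ ?_ ?_ <;>
        [ (calc cs*t*u * (cs*ct*u) = (t*ct)*(cs*cs*u*u) := by ring
            _ = 0 := by rw [ht]; ring);
          (calc cs*t*u * (s*t*cu) = (s*cs)*(t*t*u*cu) := by ring
            _ = 0 := by rw [hs]; ring);
          (calc cs*t*u * (s*ct*cu) = (s*cs)*(t*ct*u*cu) := by ring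
            _ = 0 := by rw [hs]; ring);
          (calc cs*ct*u * (s*t*cu) = (s*cs)*(t*ct*u*cu) := by ring
            _ = 0 := by rw [hs]; ring);
          (calc cs*ct*u * (s*ct*cu) = (s*cs)*(ct*ct*u*cu) := by ring
            _ = 0 := by rw [hs]; ring);
          (calc s*t*cu * (s*ct*cu) = (t*ct)*(s*s*cu*cu) := by ring
            _ = 0 := by rw [ht]; ring) ]
    have eM : f (cs * t + s * ct)
        = f (cs*t*u) + f (cs*t*cu) + f (s*ct*u) + f (s*ct*cu) := by
      have harg : cs * t + s * ct = cs*t*u + cs*t*cu + s*ct*u + s*ct*cu := by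
        have : cs * t + s * ct = cs*t*(u+cu) + s*ct*(u+cu) := by rw [hu1]; ring
        rw [this]; ring
      rw [harg]
      refine f_add4 f hf _ _ _ _ ?_ ?_ ?_ ?_ ?_ ?_ <;>
        [ (calc cs*t*u * (cs*t*cu) = (u*cu)*(cs*cs*t*t) := by ring
            _ = 0 := by rw [hu]; ring);
          (calc cs*t*u * (s*ct*u) = (s*cs)*(t*ct*u*u) := by ring
            _ = 0 := by rw [hs]; ring);
          (calc cs*t*u * (s*ct*cu) = (s*cs)*(t*ct*u*cu) := by ring
            _ = 0 := by rw [hs]; ring);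
          (calc cs*t*cu * (s*ct*u) = (s*cs)*(t*ct*u*cu) := by ring
            _ = 0 := by rw [hs]; ring);
          (calc cs*t*cu * (s*ct*cu) = (s*cs)*(t*ct*cu*cu) := by ring
            _ = 0 := by rw [hs]; ring);
          (calc s*ct*u * (s*ct*cu) = (u*cu)*(s*s*ct*ct) := by ring
            _ = 0 := by rw [hu]; ring) ]
    have eR : f (ct * u + t * cu)
        = f (s*ct*u) + f (cs*ct*u) + f (s*t*cu) + f (cs*t*cu) := by
      have harg : ct * u + t * cu = s*ct*u + cs*ct*u + s*t*cu + cs*t*cu := by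
        have : ct * u + t * cu = ct*u*(s+cs) + t*cu*(s+cs) := by rw [hs1]; ring
        rw [this]; ring
      rw [harg]
      refine f_add4 f hf _ _ _ _ ?_ ?_ ?_ ?_ ?_ ?_ <;>
        [ (calc s*ct*u * (cs*ct*u) = (s*cs)*(ct*ct*u*u) := by ring
            _ = 0 := by rw [hs]; ring);
          (calc s*ct*u * (s*t*cu) = (t*ct)*(s*s*u*cu) := by ring
            _ = 0 := by rw [ht]; ring);
          (calc s*ct*u * (cs*t*cu) = (s*cs)*(t*ct*u*cu) := by ring
            _ = 0 := by rw [hs]; ring);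
          (calc cs*ct*u * (s*t*cu) = (s*cs)*(t*ct*u*cu) := by ring
            _ = 0 := by rw [hs]; ring);
          (calc cs*ct*u * (cs*t*cu) = (t*ct)*(cs*cs*u*cu) := by ring
            _ = 0 := by rw [ht]; ring);
          (calc s*t*cu * (cs*t*cu) = (s*cs)*(t*t*cu*cu) := by ring
            _ = 0 := by rw [hs]; ring) ]
    rw [eL, eM, eR]
    have hX : (0:G) ≤ f (cs*t*cu) + f (s*ct*u) + (f (s*ct*u) + f (cs*t*cu)) :=
      add_nonneg (add_nonneg (hnonneg _) (hnonneg _)) (add_nonneg (hnonneg _) (hnonneg _))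
    calc f (cs*t*u) + f (cs*ct*u) + f (s*t*cu) + f (s*ct*cu)
        ≤ f (cs*t*u) + f (cs*ct*u) + f (s*t*cu) + f (s*ct*cu)
          + (f (cs*t*cu) + f (s*ct*u) + (f (s*ct*u) + f (cs*t*cu))) :=
          le_add_of_nonneg_right hX
      _ = f (cs*t*u) + f (cs*t*cu) + f (s*ct*u) + f (s*ct*cu)
          + (f (s*ct*u) + f (cs*ct*u) + f (s*t*cu) + f (cs*t*cu)) := by abel
  · intro hpos hzero
    have h0 : cs * t + s * ct = 0 := hpos _ hzero
    obtain ⟨h1, h2⟩ := hzs _ _ h0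
    have hst : s = s * t := by
      calc s = s * (t + ct) := by rw [ht1]; ring
        _ = s * t + s * ct := by ring
        _ = s * t := by rw [h2]; ring
    have hts : t = s * t := by
      calc t = t * (s + cs) := by rw [hs1]; ring
        _ = s * t + cs * t := by ring
        _ = s * t := by rw [h1]; ring
    exact hst.trans hts.symm
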